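/- Let n ≥ 1 be a fixed integer and let 1 ≤ a < b be real numbers. Then there exists a constant C > 0, depending only on n, such that ∑ (ℓ + ℓ') ≤ C·b·(b − a + log(b + 1)), where the sum ranges over all pairs (ℓ, ℓ') ∈ ℕ² with a < λ_{ℓ,ℓ'} ≤ b. -/

import Mathlib

lemma count_aux (N : ℕ) (d c a b : ℝ) (hd : 0 < d) (hab : a ≤ b) :
    (((Finset.range N).filter (fun m : ℕ => a < d * m + c ∧ d * m + c ≤ b)).card : ℝ)
      ≤ (b - a) / d + 1 := by
  have hcard : ((Finset.range N).filter (fun m : ℕ => a < d * m + c ∧ d * m + c ≤ b)).card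
      ≤ (Finset.Ioc (⌊(a - c)/d⌋ : ℤ) ⌊(b - c)/d⌋).card := by
    refine Finset.card_le_card_of_injOn (fun m => (m : ℤ)) ?_ ?_
    · intro m hm
      simp only [Finset.mem_coe, Finset.mem_filter, Finset.mem_range] at hm
      obtain ⟨-, h1, h2⟩ := hm
      simp only [Finset.mem_coe, Finset.mem_Ioc]
      constructor
      · rw [Int.floor_lt, div_lt_iff₀ hd]
        push_cast
        linarith
      · rw [Int.le_floor, le_div_iff₀ hd]
        push_cast
        linarith
    · intro x _ y _ h
      simpa using h
  have h2 : ((Finset.Ioc (⌊(a - c)/d⌋ : ℤ) ⌊(b - c)/d⌋).card : ℝ)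
      ≤ (b - a) / d + 1 := by
    rw [Int.card_Ioc]
    have hB : (⌊(b - c)/d⌋ : ℝ) ≤ (b - c)/d := Int.floor_le _
    have hA : (a - c)/d - 1 < (⌊(a - c)/d⌋ : ℝ) := Int.sub_one_lt_floor _
    have hdiff : (b - c)/d - (a - c)/d = (b - a)/d := by ring
    rcases le_or_gt (⌊(b - c)/d⌋ - ⌊(a - c)/d⌋) 0 with h | h
    · rw [Int.toNat_of_nonpos h]
      have : 0 ≤ (b - a)/d := div_nonneg (by linarith) hd.le
      push_cast
      linarith
    · have : ((⌊(b - c)/d⌋ - ⌊(a - c)/d⌋).toNat : ℝ)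
          = ((⌊(b - c)/d⌋ : ℝ) - (⌊(a - c)/d⌋ : ℝ)) := by
        rw [← Int.cast_natCast, Int.toNat_of_nonneg h.le]
        push_cast
        ring
      rw [this]
      linarith
  calc (((Finset.range N).filter (fun m : ℕ => a < d * m + c ∧ d * m + c ≤ b)).card : ℝ)
      ≤ ((Finset.Ioc (⌊(a - c)/d⌋ : ℤ) ⌊(b - c)/d⌋).card : ℝ) := by exact_mod_cast hcard
    _ ≤ (b - a) / d + 1 := h2

lemma sq_sum_aux (N : ℕ) : ∑ ℓ ∈ Finset.range N, (1:ℝ)/((ℓ:ℝ)+1)^2 ≤ 2 := by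
  have key : ∀ M : ℕ, ∑ ℓ ∈ Finset.range M, (1:ℝ)/((ℓ:ℝ)+1)^2 ≤ 2 - 1/(M:ℝ) := by
    intro M
    induction M with
    | zero => norm_num
    | succ M ih =>
      rcases Nat.eq_zero_or_pos M with rfl | hM
      · norm_num
      rw [Finset.sum_range_succ]
      have h1 : (0:ℝ) < (M:ℝ) := by exact_mod_cast hM
      have hstep : (1:ℝ)/((M:ℝ)+1)^2 ≤ 1/(M:ℝ) - 1/((M:ℝ)+1) := by
        rw [div_sub_div _ _ h1.ne' (by positivity), div_le_div_iff₀ (by positivity) (by positivity)]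
        nlinarith
      have h3 : ((M+1 : ℕ) : ℝ) = (M:ℝ) + 1 := by push_cast; ring
      rw [h3]
      linarith
  have : (0:ℝ) ≤ 1/(N:ℝ) := by positivity
  linarith [key N]

lemma harm_aux (N : ℕ) : ∑ ℓ ∈ Finset.range N, (1:ℝ)/((ℓ:ℝ)+1) ≤ 1 + Real.log N := by
  have h := harmonic_le_one_add_log N
  have heq : ((harmonic N : ℚ) : ℝ) = ∑ ℓ ∈ Finset.range N, (1:ℝ)/((ℓ:ℝ)+1) := by
    rw [harmonic]
    push_cast
    simp [one_div]
  linarith [heq ▸ h]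

set_option maxHeartbeats 1000000 in
/-- For an integer `n ≥ 1`, `λ_{ℓ,ℓ'} = 2ℓℓ' + n(ℓ+ℓ')` is the sublaplacian eigenvalue on
`𝓗^{ℓ,ℓ'} ⊂ L²(S^{2n+1})`.  For `1 ≤ a < b`, the sum of `ℓ + ℓ'` over all pairs with
`a < λ_{ℓ,ℓ'} ≤ b` is at most `C·b·(b − a + log(b+1))`, with `C` depending only on `n`. -/
theorem sum_between_hyperbolas (n : ℕ) (hn : 1 ≤ n) :
    ∃ C : ℝ, 0 < C ∧ ∀ a b : ℝ, 1 ≤ a → a < b →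
      (∑ p ∈ (Finset.range (⌊b⌋₊ + 1) ×ˢ Finset.range (⌊b⌋₊ + 1)).filter
          (fun p => a < ((2 * p.1 * p.2 + n * (p.1 + p.2) : ℕ) : ℝ) ∧
            ((2 * p.1 * p.2 + n * (p.1 + p.2) : ℕ) : ℝ) ≤ b),
        ((p.1 + p.2 : ℕ) : ℝ))
      ≤ C * b * (b - a + Real.log (b + 1)) := by
  refine ⟨12, by norm_num, fun a b ha hab => ?_⟩
  set K := ⌊b⌋₊ + 1 with hK
  have hb1 : (1:ℝ) < b := lt_of_le_of_lt ha hab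
  have hb0 : (0:ℝ) < b := by linarith
  set P : ℕ × ℕ → Prop := fun p => a < ((2 * p.1 * p.2 + n * (p.1 + p.2) : ℕ) : ℝ) ∧
      ((2 * p.1 * p.2 + n * (p.1 + p.2) : ℕ) : ℝ) ≤ b with hP
  set S := (Finset.range K ×ˢ Finset.range K).filter P with hS
  set f : ℕ × ℕ → ℝ := fun p => ((p.1 + p.2 : ℕ) : ℝ) with hf
  -- Step 1: reduce to pairs with p.1 ≤ p.2
  have hswap : ∑ p ∈ S.filter (fun p => p.2 ≤ p.1), f p
      = ∑ p ∈ S.filter (fun p => p.1 ≤ p.2), f p := by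
    refine Finset.sum_nbij' (fun p => Prod.swap p) (fun p => Prod.swap p) ?_ ?_ ?_ ?_ ?_
    · intro p hp
      simp only [hS, hP, Finset.mem_filter, Finset.mem_product, Finset.mem_range,
        Prod.fst_swap, Prod.snd_swap] at hp ⊢
      obtain ⟨⟨⟨hp1, hp2⟩, hc1, hc2⟩, hle⟩ := hp
      push_cast at hc1 hc2 ⊢
      refine ⟨⟨⟨hp2, hp1⟩, by linarith, by linarith⟩, hle⟩
    · intro p hp
      simp only [hS, hP, Finset.mem_filter, Finset.mem_product, Finset.mem_range,
        Prod.fst_swap, Prod.snd_swap] at hp ⊢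
      obtain ⟨⟨⟨hp1, hp2⟩, hc1, hc2⟩, hle⟩ := hp
      push_cast at hc1 hc2 ⊢
      refine ⟨⟨⟨hp2, hp1⟩, by linarith, by linarith⟩, hle⟩
    · intro p _; exact Prod.swap_swap p
    · intro p _; exact Prod.swap_swap p
    · intro p _
      simp only [hf, Prod.fst_swap, Prod.snd_swap, Nat.add_comm]
  have hfnonneg : ∀ p ∈ S, 0 ≤ f p := fun p _ => by positivity
  have hsplit : ∑ p ∈ S, f p ≤ 2 * ∑ p ∈ S.filter (fun p => p.1 ≤ p.2), f p := by
    have h1 := (Finset.sum_filter_add_sum_filter_not S (fun p => p.1 ≤ p.2) f).symm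
    have h2 : ∑ p ∈ S.filter (fun p => ¬ p.1 ≤ p.2), f p
        ≤ ∑ p ∈ S.filter (fun p => p.2 ≤ p.1), f p := by
      refine Finset.sum_le_sum_of_subset_of_nonneg ?_ (fun p hp _ => by positivity)
      intro p hp
      simp only [Finset.mem_filter] at hp ⊢
      exact ⟨hp.1, le_of_not_ge hp.2⟩
    have h3 : (0:ℝ) ≤ ∑ p ∈ S.filter (fun p => p.1 ≤ p.2), f p :=
      Finset.sum_nonneg (fun p hp => by positivity)
    rw [h1]
    linarith [hswap ▸ h2]
  -- Step 2: bound the half-sum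
  have hKb : (K:ℝ) ≤ b + 1 := by
    have := Nat.floor_le hb0.le
    push_cast [hK]
    linarith
  have hbamn : (0:ℝ) ≤ b - a := by linarith
  have hT : ∑ p ∈ S.filter (fun p => p.1 ≤ p.2), f p
      ≤ ∑ ℓ ∈ Finset.range K, ((b - a)/(2*(ℓ:ℝ)+n) + 1) * (2*b/(2*(ℓ:ℝ)+n)) := by
    have hrw : ∑ p ∈ S.filter (fun p => p.1 ≤ p.2), f p
        = ∑ ℓ ∈ Finset.range K, ∑ ℓ' ∈ (Finset.range K).filter
            (fun ℓ' => P (ℓ, ℓ') ∧ ℓ ≤ ℓ'), f (ℓ, ℓ') := by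
      rw [hS, Finset.filter_filter, Finset.sum_filter, Finset.sum_product]
      simp_rw [Finset.sum_filter]
    rw [hrw]
    refine Finset.sum_le_sum (fun ℓ _ => ?_)
    have hn1 : (1:ℝ) ≤ (n:ℝ) := by exact_mod_cast hn
    have hD0 : (0:ℝ) < 2*(ℓ:ℝ) + n := by
      have : (0:ℝ) ≤ (ℓ:ℝ) := Nat.cast_nonneg ℓ
      linarith
    have hterm : ∀ ℓ' ∈ (Finset.range K).filter (fun ℓ' => P (ℓ, ℓ') ∧ ℓ ≤ ℓ'),
        f (ℓ, ℓ') ≤ 2*b/(2*(ℓ:ℝ)+n) := by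
      intro ℓ' hℓ'
      simp only [Finset.mem_filter, Finset.mem_range, hP] at hℓ'
      obtain ⟨-, ⟨hc1, hc2⟩, hle⟩ := hℓ'
      have hcast : ((2 * ℓ * ℓ' + n * (ℓ + ℓ') : ℕ) : ℝ)
          = 2*(ℓ:ℝ)*(ℓ':ℝ) + n*ℓ + n*ℓ' := by push_cast; ring
      rw [hcast] at hc2
      have hll : (ℓ:ℝ) ≤ (ℓ':ℝ) := by exact_mod_cast hle
      have hl0 : (0:ℝ) ≤ (ℓ:ℝ) := Nat.cast_nonneg ℓ
      have h1 : (2*(ℓ:ℝ)+n) * (ℓ':ℝ) ≤ b := by nlinarith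
      have h2 : f (ℓ, ℓ') ≤ 2 * (ℓ':ℝ) := by
        simp only [hf]
        push_cast
        linarith
      have h3 : (ℓ':ℝ) ≤ b/(2*(ℓ:ℝ)+n) := by
        rw [le_div_iff₀ hD0]
        linarith [h1]
      calc f (ℓ, ℓ') ≤ 2 * (ℓ':ℝ) := h2
        _ ≤ 2 * (b/(2*(ℓ:ℝ)+n)) := by linarith
        _ = 2*b/(2*(ℓ:ℝ)+n) := by ring
    have hsle := Finset.sum_le_card_nsmul _ _ _ hterm
    have hcount : (((Finset.range K).filter (fun ℓ' => P (ℓ, ℓ') ∧ ℓ ≤ ℓ')).card : ℝ)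
        ≤ (b - a)/(2*(ℓ:ℝ)+n) + 1 := by
      have hsub : (Finset.range K).filter (fun ℓ' => P (ℓ, ℓ') ∧ ℓ ≤ ℓ')
          ⊆ (Finset.range K).filter
            (fun m : ℕ => a < (2*(ℓ:ℝ)+n) * m + (n:ℝ)*ℓ ∧ (2*(ℓ:ℝ)+n) * m + (n:ℝ)*ℓ ≤ b) := by
        intro m hm
        simp only [Finset.mem_filter, Finset.mem_range, hP] at hm ⊢
        obtain ⟨hmK, ⟨hc1, hc2⟩, -⟩ := hm
        have hcast : ((2 * ℓ * m + n * (ℓ + m) : ℕ) : ℝ)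
            = (2*(ℓ:ℝ)+n) * m + (n:ℝ)*ℓ := by push_cast; ring
        rw [hcast] at hc1 hc2
        exact ⟨hmK, hc1, hc2⟩
      calc (((Finset.range K).filter (fun ℓ' => P (ℓ, ℓ') ∧ ℓ ≤ ℓ')).card : ℝ)
          ≤ (((Finset.range K).filter
              (fun m : ℕ => a < (2*(ℓ:ℝ)+n) * m + (n:ℝ)*ℓ ∧ (2*(ℓ:ℝ)+n) * m + (n:ℝ)*ℓ ≤ b)).card : ℝ) := by
            exact_mod_cast Finset.card_le_card hsub
        _ ≤ (b - a)/(2*(ℓ:ℝ)+n) + 1 := count_aux K (2*(ℓ:ℝ)+n) ((n:ℝ)*ℓ) a b hD0 hab.le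
    have h2b : (0:ℝ) ≤ 2*b/(2*(ℓ:ℝ)+n) := by positivity
    calc ∑ ℓ' ∈ (Finset.range K).filter (fun ℓ' => P (ℓ, ℓ') ∧ ℓ ≤ ℓ'), f (ℓ, ℓ')
        ≤ (((Finset.range K).filter (fun ℓ' => P (ℓ, ℓ') ∧ ℓ ≤ ℓ')).card : ℝ)
          * (2*b/(2*(ℓ:ℝ)+n)) := by
          simpa [nsmul_eq_mul] using hsle
      _ ≤ ((b - a)/(2*(ℓ:ℝ)+n) + 1) * (2*b/(2*(ℓ:ℝ)+n)) :=
          mul_le_mul_of_nonneg_right hcount h2b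
  -- Step 3: sum the per-row bounds
  have hstep3 : ∑ ℓ ∈ Finset.range K, ((b - a)/(2*(ℓ:ℝ)+n) + 1) * (2*b/(2*(ℓ:ℝ)+n))
      ≤ 2*b*(b-a)*2 + 2*b*(1 + Real.log (b+1)) := by
    have hmain : ∑ ℓ ∈ Finset.range K, ((b - a)/(2*(ℓ:ℝ)+n) + 1) * (2*b/(2*(ℓ:ℝ)+n))
        ≤ ∑ ℓ ∈ Finset.range K, (2*b*(b-a) * ((1:ℝ)/((ℓ:ℝ)+1)^2) + 2*b * ((1:ℝ)/((ℓ:ℝ)+1))) := by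
      refine Finset.sum_le_sum (fun ℓ _ => ?_)
      have hn1 : (1:ℝ) ≤ (n:ℝ) := by exact_mod_cast hn
      have hl0 : (0:ℝ) ≤ (ℓ:ℝ) := Nat.cast_nonneg ℓ
      have hD0 : (0:ℝ) < 2*(ℓ:ℝ) + n := by linarith
      have hDl : (ℓ:ℝ) + 1 ≤ 2*(ℓ:ℝ) + n := by linarith
      have hl1 : (0:ℝ) < (ℓ:ℝ) + 1 := by linarith
      have he : ((b - a)/(2*(ℓ:ℝ)+n) + 1) * (2*b/(2*(ℓ:ℝ)+n))
          = 2*b*(b-a) * ((1:ℝ)/(2*(ℓ:ℝ)+n)^2) + 2*b * ((1:ℝ)/(2*(ℓ:ℝ)+n)) := by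
        field_simp
      rw [he]
      have hi1 : (1:ℝ)/(2*(ℓ:ℝ)+n) ≤ 1/((ℓ:ℝ)+1) := by
        apply one_div_le_one_div_of_le hl1 hDl
      have hi2 : (1:ℝ)/(2*(ℓ:ℝ)+n)^2 ≤ 1/((ℓ:ℝ)+1)^2 := by
        apply one_div_le_one_div_of_le (by positivity)
        exact pow_le_pow_left₀ hl1.le hDl 2
      have hc1 : (0:ℝ) ≤ 2*b*(b-a) := by nlinarith
      have hc2 : (0:ℝ) ≤ 2*b := by linarith
      nlinarith [mul_le_mul_of_nonneg_left hi2 hc1, mul_le_mul_of_nonneg_left hi1 hc2]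
    rw [Finset.sum_add_distrib, ← Finset.mul_sum, ← Finset.mul_sum] at hmain
    have hsq := sq_sum_aux K
    have hharm := harm_aux K
    have hlogK : Real.log K ≤ Real.log (b+1) := by
      apply Real.log_le_log (by positivity)
      exact hKb
    have hc1 : (0:ℝ) ≤ 2*b*(b-a) := by nlinarith
    have hc2 : (0:ℝ) ≤ 2*b := by linarith
    linarith [mul_le_mul_of_nonneg_left hsq hc1, mul_le_mul_of_nonneg_left (hharm.trans (show (1:ℝ) + Real.log K ≤ 1 + Real.log (b+1) by linarith)) hc2]
  -- Conclusion
  have hlog2 : Real.log 2 ≤ Real.log (b+1) := by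
    apply Real.log_le_log (by norm_num)
    linarith
  have hlog2' : (0.6931471803:ℝ) < Real.log 2 := Real.log_two_gt_d9
  calc ∑ p ∈ S, f p ≤ 2 * ∑ p ∈ S.filter (fun p => p.1 ≤ p.2), f p := hsplit
    _ ≤ 2 * (2*b*(b-a)*2 + 2*b*(1 + Real.log (b+1))) := by linarith [hT.trans hstep3]
    _ ≤ 12 * b * (b - a + Real.log (b + 1)) := by
        nlinarith [mul_nonneg hb0.le hbamn, mul_le_mul_of_nonneg_right (hlog2'.le.trans hlog2) hb0.le]
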